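/- arXiv:1012.2040 — 2 statements merged into one kernel-verified Lean document; each statement's English description precedes it below -/
import Mathlib

section
/- Let κ be an inaccessible cardinal, λ ≥ κ a cardinal, and g : P_κλ → P_κλ any function. Then {a ∈ P'_κλ : for every z ⊆ a with |z| < κ_a, g(z) ⊆ a} ∈ F_IT[κ,λ]. -/
open Cardinal Set

/-! Combinatorial framework: `P_κ λ`, clubs, stationarity, thin/slender lists,
branches, the principles `TP`, `SP`, `ITP`, `ISP`, the ideals `I_IT`, `I_IS`,
ultrafilter notions, ordinal clubs, and square sequences. -/

/-- `P_κ λ`: the collection of subsets of (the set of ordinals below) `λ` of size `< κ`. -/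
def Pk (κ lam : Cardinal.{0}) : Set (Set Ordinal.{0}) :=
  {a | (∀ α ∈ a, α < lam.ord) ∧ #a < Cardinal.lift.{1} κ}

/-- `C` is club in `P_κ X` (represented by `S`, a collection of subsets of `X`):
cofinal in `(S, ⊆)` and closed under unions of `⊆`-increasing chains of length `< κ`. -/
def IsClubIn {X : Type*} (κ : Cardinal.{0}) (S : Set (Set X)) (C : Set (Set X)) : Prop :=
  C ⊆ S ∧ (∀ a ∈ S, ∃ c ∈ C, a ⊆ c) ∧
    ∀ δ : Ordinal.{0}, 0 < δ → δ.card < κ →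
      ∀ f : Ordinal.{0} → Set X, (∀ β < δ, f β ∈ C) →
        (∀ β γ, β ≤ γ → γ < δ → f β ⊆ f γ) →
        (⋃ β ∈ Set.Iio δ, f β) ∈ C

/-- `T` is stationary in `P_κ X`: it meets every club. -/
def IsStatIn {X : Type*} (κ : Cardinal.{0}) (S T : Set (Set X)) : Prop :=
  T ⊆ S ∧ ∀ C, IsClubIn κ S C → (T ∩ C).Nonempty

/-- A `P_κ λ`-list: `d a ⊆ a` for every `a ∈ P_κ λ`. -/
def IsList (κ lam : Cardinal) (d : Set Ordinal → Set Ordinal) : Prop :=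
  ∀ a ∈ Pk κ lam, d a ⊆ a

/-- A thin `P_κ λ`-list: on a club of `c`'s, `|{d_a ∩ c : c ⊆ a ∈ P_κ λ}| < κ`. -/
def IsThin (κ lam : Cardinal) (d : Set Ordinal → Set Ordinal) : Prop :=
  ∃ C, IsClubIn κ (Pk κ lam) C ∧
    ∀ c ∈ C, #{x : Set Ordinal | ∃ a ∈ Pk κ lam, c ⊆ a ∧ x = d a ∩ c} < Cardinal.lift.{1} κ

/-- `H_θ`: sets hereditarily of cardinality `< θ`. -/
def HSet (θ : Cardinal.{0}) : Set ZFSet.{0} :=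
  {x | ZFSet.Hereditarily (fun y => #y.toSet < Cardinal.lift.{1} θ) x}

/-- `x` is the von Neumann ordinal corresponding to the ordinal `α`. -/
def IsOrdZF (x : ZFSet) (α : Ordinal) : Prop :=
  x.IsOrdinal ∧ x.rank = α

/-- The ZFC set `x` codes the set of ordinals `b`. -/
def CodesSet (x : ZFSet) (b : Set Ordinal) : Prop :=
  ∀ y, y ∈ x ↔ ∃ α ∈ b, IsOrdZF y α

/-- `M ∩ λ`: the set of ordinals below `λ` whose von Neumann code lies in `M`. -/
def ordsOf (lam : Cardinal) (M : Set ZFSet) : Set Ordinal :=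
  {α | α < lam.ord ∧ ∃ x ∈ M, IsOrdZF x α}

/-- A slender `P_κ λ`-list: for every sufficiently large regular `θ` there is a club
`C ⊆ P_κ H_θ` such that `d_{M ∩ λ} ∩ b ∈ M` for all `M ∈ C` and all countable `b ∈ M`
with `b ⊆ λ`. -/
def IsSlender (κ lam : Cardinal) (d : Set Ordinal → Set Ordinal) : Prop :=
  ∃ θ₀ : Cardinal, ∀ θ, θ₀ ≤ θ → θ.IsRegular →
    ∃ C, IsClubIn κ {M : Set ZFSet.{0} | M ⊆ HSet θ ∧ #M < Cardinal.lift.{1} κ} C ∧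
      ∀ M ∈ C, ∀ b : Set Ordinal, b.Countable → (∀ α ∈ b, α < lam.ord) →
        (∃ x ∈ M, CodesSet x b) →
        ∃ x ∈ M, CodesSet x (d (ordsOf lam M) ∩ b)

/-- `e` is a cofinal branch of the list `d`. -/
def IsCofBranch (κ lam : Cardinal) (d : Set Ordinal → Set Ordinal) (e : Set Ordinal) : Prop :=
  (∀ α ∈ e, α < lam.ord) ∧
    ∀ a ∈ Pk κ lam, ∃ z ∈ Pk κ lam, a ⊆ z ∧ e ∩ a = d z ∩ a

/-- `e` is an ineffable branch of the list `d`. -/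
def IsIneffBranch (κ lam : Cardinal) (d : Set Ordinal → Set Ordinal) (e : Set Ordinal) : Prop :=
  (∀ α ∈ e, α < lam.ord) ∧
    IsStatIn κ (Pk κ lam) {a ∈ Pk κ lam | e ∩ a = d a}

/-- `TP(κ,λ)`: every thin `P_κ λ`-list has a cofinal branch. -/
def TP (κ lam : Cardinal) : Prop :=
  ∀ d, IsList κ lam d → IsThin κ lam d → ∃ e, IsCofBranch κ lam d e

/-- `SP(κ,λ)`: every slender `P_κ λ`-list has a cofinal branch. -/
def SP (κ lam : Cardinal) : Prop :=
  ∀ d, IsList κ lam d → IsSlender κ lam d → ∃ e, IsCofBranch κ lam d e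

/-- `ITP(κ,λ)`: every thin `P_κ λ`-list has an ineffable branch. -/
def ITP (κ lam : Cardinal) : Prop :=
  ∀ d, IsList κ lam d → IsThin κ lam d → ∃ e, IsIneffBranch κ lam d e

/-- `ISP(κ,λ)`: every slender `P_κ λ`-list has an ineffable branch. -/
def ISP (κ lam : Cardinal) : Prop :=
  ∀ d, IsList κ lam d → IsSlender κ lam d → ∃ e, IsIneffBranch κ lam d e

/-- The list `d` is `A`-effable. -/
def IsEffable (κ lam : Cardinal) (d : Set Ordinal → Set Ordinal) (A : Set (Set Ordinal)) : Prop :=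
  ∀ S, S ⊆ A → IsStatIn κ (Pk κ lam) S →
    ∃ a ∈ S, ∃ b ∈ S, a ⊆ b ∧ d a ≠ d b ∩ a

/-- The ideal `I_IT[κ,λ]`. -/
def IIT (κ lam : Cardinal) : Set (Set (Set Ordinal)) :=
  {A | A ⊆ Pk κ lam ∧ ∃ d, IsList κ lam d ∧ IsThin κ lam d ∧ IsEffable κ lam d A}

/-- The ideal `I_IS[κ,λ]`. -/
def IIS (κ lam : Cardinal) : Set (Set (Set Ordinal)) :=
  {A | A ⊆ Pk κ lam ∧ ∃ d, IsList κ lam d ∧ IsSlender κ lam d ∧ IsEffable κ lam d A}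

/-- The filter `F_IT[κ,λ]` dual to `I_IT[κ,λ]`. -/
def FIT (κ lam : Cardinal) : Set (Set (Set Ordinal)) :=
  {A | A ⊆ Pk κ lam ∧ (Pk κ lam \ A) ∈ IIT κ lam}

/-- `U` is an ultrafilter on the set `X`. -/
def IsUFOn {α : Type*} (X : Set α) (U : Set (Set α)) : Prop :=
  (∀ A ∈ U, A ⊆ X) ∧ X ∈ U ∧ ∅ ∉ U ∧
    (∀ A ∈ U, ∀ B, A ⊆ B → B ⊆ X → B ∈ U) ∧
    (∀ A ∈ U, ∀ B ∈ U, A ∩ B ∈ U) ∧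
    (∀ A, A ⊆ X → (A ∈ U ∨ X \ A ∈ U))

/-- `U` is `κ`-complete: closed under intersections of fewer than `κ` of its members. -/
def KComplete (κ : Cardinal.{0}) (X : Set (Set Ordinal)) (U : Set (Set (Set Ordinal))) : Prop :=
  ∀ s : Set (Set (Set Ordinal)), s ⊆ U → #s < Cardinal.lift.{1} κ → X ∩ ⋂₀ s ∈ U

/-- `U` is fine on `P_κ λ`. -/
def Fine (κ lam : Cardinal) (U : Set (Set (Set Ordinal))) : Prop :=
  ∀ x < lam.ord, {a ∈ Pk κ lam | x ∈ a} ∈ U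

/-- `U` is normal on `P_κ λ`: closed under diagonal intersections. -/
def NormalUF (κ lam : Cardinal) (U : Set (Set (Set Ordinal))) : Prop :=
  ∀ A : Ordinal → Set (Set Ordinal), (∀ x < lam.ord, A x ∈ U) →
    {a ∈ Pk κ lam | ∀ x ∈ a, a ∈ A x} ∈ U

/-- `κ` is strongly compact: for every `λ ≥ κ` there is a `κ`-complete fine
ultrafilter on `P_κ λ`. -/
def IsStronglyCompact (κ : Cardinal) : Prop :=
  ∀ lam : Cardinal, κ ≤ lam →
    ∃ U, IsUFOn (Pk κ lam) U ∧ KComplete κ (Pk κ lam) U ∧ Fine κ lam U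

/-- `κ` is supercompact: for every `λ ≥ κ` there is a `κ`-complete normal fine
ultrafilter on `P_κ λ`. -/
def IsSupercompact (κ : Cardinal) : Prop :=
  ∀ lam : Cardinal, κ ≤ lam →
    ∃ U, IsUFOn (Pk κ lam) U ∧ KComplete κ (Pk κ lam) U ∧ Fine κ lam U ∧ NormalUF κ lam U

/-- `C` is club in the ordinal `o`: unbounded in `o` and closed. -/
def OrdClub (o : Ordinal) (C : Set Ordinal) : Prop :=
  C ⊆ Set.Iio o ∧ (∀ β < o, ∃ γ ∈ C, β ≤ γ) ∧
    ∀ α < o, 0 < α → sSup (C ∩ Set.Iio α) = α → α ∈ C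

/-- `S` is stationary in the ordinal `o`. -/
def OrdStat (o : Ordinal) (S : Set Ordinal) : Prop :=
  S ⊆ Set.Iio o ∧ ∀ C, OrdClub o C → (S ∩ C).Nonempty

/-- `δ` is a limit point of `C`: `δ > 0` and `δ = sup (C ∩ δ)`. -/
def IsLimPt (C : Set Ordinal) (δ : Ordinal) : Prop :=
  0 < δ ∧ sSup (C ∩ Set.Iio δ) = δ

/-- `κ` is an ineffable cardinal. -/
def IsIneffableCard (κ : Cardinal) : Prop :=
  ∀ d : Ordinal → Set Ordinal, (∀ α < κ.ord, d α ⊆ Set.Iio α) →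
    ∃ e ⊆ Set.Iio κ.ord, OrdStat κ.ord {α | α < κ.ord ∧ e ∩ Set.Iio α = d α}

/-- A `□_E(κ,λ)`-sequence. -/
def IsSquareSeq (κ : Cardinal.{0}) (lam : Ordinal.{0}) (E : Set Ordinal.{0})
    (𝒞 : Ordinal.{0} → Set (Set Ordinal.{0})) : Prop :=
  (∀ α, Order.IsSuccLimit α → α ∈ E → α < lam →
    ((𝒞 α).Nonempty ∧ #(𝒞 α) < Cardinal.lift.{1} κ) ∧
      ∀ C ∈ 𝒞 α, OrdClub α C ∧ ∀ β, IsLimPt C β → β ∈ E → C ∩ Set.Iio β ∈ 𝒞 β) ∧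
  ¬∃ D, OrdClub lam D ∧ ∀ δ, IsLimPt D δ → δ ∈ E → δ < lam → D ∩ Set.Iio δ ∈ 𝒞 δ

/-- `□_E(κ,λ)` holds. -/
def SquareE (κ : Cardinal.{0}) (lam : Ordinal.{0}) (E : Set Ordinal.{0}) : Prop :=
  ∃ 𝒞, IsSquareSeq κ lam E 𝒞

/-- `(a, ∈) ≺ (λ, ∈)`: `a` is an elementary substructure of the ordinals below `lam`
(with `∈`, equivalently the order, as the only relation). -/
def ElemSubOrd (lam : Ordinal) (a : Set Ordinal) : Prop :=
  letI := FirstOrder.Language.orderStructure ↥a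
  letI := FirstOrder.Language.orderStructure ↥(Set.Iio lam)
  ∃ h : a ⊆ Set.Iio lam,
    ∀ (n : ℕ) (φ : FirstOrder.Language.order.Formula (Fin n)) (v : Fin n → ↥a),
      φ.Realize v ↔ φ.Realize fun i => Set.inclusion h (v i)

/-- `P'_κ λ`: the members `a` of `P_κ λ` with `a ∩ κ` an ordinal and `(a,∈) ≺ (λ,∈)`. -/
def P'k (κ lam : Cardinal) : Set (Set Ordinal) :=
  {a ∈ Pk κ lam | (∃ β : Ordinal, a ∩ Set.Iio κ.ord = Set.Iio β) ∧ ElemSubOrd lam.ord a}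

/-- `κ_a`: the ordinal `a ∩ κ` (for `a ∈ P'_κ λ`). -/
noncomputable def kapOf (κ : Cardinal) (a : Set Ordinal) : Ordinal :=
  sInf {β : Ordinal | a ∩ Set.Iio κ.ord ⊆ Set.Iio β}

section Aux
open FirstOrder

namespace PkAux

variable {κ lam : Cardinal.{0}}

lemma lreg (hκ : κ.IsInaccessible) : (Cardinal.lift.{1} κ).IsRegular := by
  constructor
  · simpa using hκ.1.le
  · rw [← Cardinal.lift_ord, ← Ordinal.lift_cof]
    exact Cardinal.lift_le.2 hκ.2

lemma laleph0 (hκ : κ.IsInaccessible) : ℵ₀ < Cardinal.lift.{1} κ := by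
  simpa using hκ.1

lemma lsl (hκ : κ.IsInaccessible) :
    ∀ x < Cardinal.lift.{1} κ, (2 : Cardinal.{1}) ^ x < Cardinal.lift.{1} κ := by
  intro x hx
  obtain ⟨y, hy, rfl⟩ := Cardinal.lt_lift_iff.1 hx
  rw [← Cardinal.lift_two_power]
  exact Cardinal.lift_lt.2 (hκ.3 hy)

lemma mem_Pk {a : Set Ordinal} :
    a ∈ Pk κ lam ↔ (∀ α ∈ a, α < lam.ord) ∧ #a < Cardinal.lift.{1} κ := Iff.rfl

lemma Pk_union (ha : a ∈ Pk κ lam) (hb : b ∈ Pk κ lam) (hκ : κ.IsInaccessible) :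
    a ∪ b ∈ Pk κ lam := by
  refine ⟨fun α hα => hα.elim (ha.1 α) (hb.1 α), ?_⟩
  exact (Cardinal.mk_union_le a b).trans_lt
    (Cardinal.add_lt_of_lt (laleph0 hκ).le ha.2 hb.2)

/-- unions of `<κ`-chains (indeed arbitrary small families) stay in `Pk`. -/
lemma Pk_sUnion (hκ : κ.IsInaccessible) {δ : Ordinal.{0}} (hδ : δ.card < κ)
    (f : Ordinal → Set Ordinal) (hf : ∀ β < δ, f β ∈ Pk κ lam) :
    (⋃ β ∈ Set.Iio δ, f β) ∈ Pk κ lam := by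
  constructor
  · intro α hα
    simp only [Set.mem_iUnion] at hα
    obtain ⟨β, hβ, hα⟩ := hα
    exact (hf β hβ).1 α hα
  · have : (⋃ β ∈ Set.Iio δ, f β) = ⋃ i : ↥(Set.Iio δ), f i := by
      simp [Set.iUnion_subtype]
    rw [this]
    have hι : #(↥(Set.Iio δ)) < Cardinal.lift.{1} κ := by
      rw [Ordinal.mk_Iio_ordinal]
      exact Cardinal.lift_lt.2 hδ
    refine (Cardinal.mk_iUnion_le _).trans_lt ?_
    refine Cardinal.mul_lt_of_lt (laleph0 hκ).le hι ?_
    exact Cardinal.iSup_lt_of_isRegular (lreg hκ) hι fun i => (hf i i.2).2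

lemma Pk_club (hκ : κ.IsInaccessible) : IsClubIn κ (Pk κ lam) (Pk κ lam) :=
  ⟨le_refl _, fun a ha => ⟨a, ha, subset_rfl⟩,
    fun δ _ hδ f hf _ => Pk_sUnion hκ hδ f hf⟩

end PkAux
end Aux
namespace PkAux

/-- index of an ordinal `< ω`. -/
noncomputable def natOf (β : Ordinal.{0}) : ℕ :=
  if h : β < Ordinal.omega0 then (Ordinal.lt_omega0.1 h).choose else 0

lemma natOf_spec {β : Ordinal.{0}} (h : β < Ordinal.omega0) : β = (natOf β : ℕ) := by
  rw [natOf, dif_pos h]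
  exact (Ordinal.lt_omega0.1 h).choose_spec

lemma natOf_natCast (n : ℕ) : natOf (n : Ordinal.{0}) = n := by
  have h := natOf_spec (Ordinal.nat_lt_omega0 n)
  exact_mod_cast h.symm

lemma iUnion_nat_eq {u : ℕ → Set Ordinal.{0}} :
    (⋃ β ∈ Set.Iio (Ordinal.omega0), u (natOf β)) = ⋃ n, u n := by
  ext α
  simp only [Set.mem_iUnion, Set.mem_Iio]
  constructor
  · rintro ⟨β, _, h⟩; exact ⟨natOf β, h⟩
  · rintro ⟨n, h⟩
    exact ⟨n, Ordinal.nat_lt_omega0 n, by rwa [natOf_natCast]⟩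

variable {κ lam : Cardinal.{0}}

/-- a club is closed under unions of increasing ω-chains of its members. -/
lemma club_iUnion_nat {C : Set (Set Ordinal.{0})} (hκ : κ.IsInaccessible)
    (hC : IsClubIn κ (Pk κ lam) C) (u : ℕ → Set Ordinal)
    (hmono : ∀ m n, m ≤ n → u m ⊆ u n) (hmem : ∀ n, u n ∈ C) :
    (⋃ n, u n) ∈ C := by
  rw [← iUnion_nat_eq]
  refine hC.2.2 Ordinal.omega0 Ordinal.omega0_pos (by simpa using hκ.1) _
    (fun β _ => hmem _) (fun β γ hβγ hγ => hmono _ _ ?_)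
  have hβ : β < Ordinal.omega0 := lt_of_le_of_lt hβγ hγ
  have h1 := natOf_spec hβ
  have h2 := natOf_spec hγ
  rw [h1, h2] at hβγ
  exact_mod_cast hβγ

lemma club_inter {C D : Set (Set Ordinal.{0})} (hκ : κ.IsInaccessible)
    (hC : IsClubIn κ (Pk κ lam) C) (hD : IsClubIn κ (Pk κ lam) D) :
    IsClubIn κ (Pk κ lam) (C ∩ D) := by
  classical
  obtain ⟨hCP, hCcof, hCcl⟩ := hC
  obtain ⟨hDP, hDcof, hDcl⟩ := hD
  refine ⟨fun x hx => hCP hx.1, ?_, ?_⟩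
  · -- cofinality via interleaving
    intro a ha
    -- choice functions
    have FC : ∀ x : Set Ordinal, ∃ c, x ∈ Pk κ lam → (c ∈ C ∧ x ⊆ c) := by
      intro x
      by_cases hx : x ∈ Pk κ lam
      · obtain ⟨c, hc, hxc⟩ := hCcof x hx
        exact ⟨c, fun _ => ⟨hc, hxc⟩⟩
      · exact ⟨∅, fun h => absurd h hx⟩
    have FD : ∀ x : Set Ordinal, ∃ c, x ∈ Pk κ lam → (c ∈ D ∧ x ⊆ c) := by
      intro x
      by_cases hx : x ∈ Pk κ lam
      · obtain ⟨c, hc, hxc⟩ := hDcof x hx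
        exact ⟨c, fun _ => ⟨hc, hxc⟩⟩
      · exact ⟨∅, fun h => absurd h hx⟩
    choose fc hfc using FC
    choose fd hfd using FD
    set u : ℕ → Set Ordinal := fun n => Nat.rec (fc a) (fun _ x => fd (fc x)) n with hu
    have hu0 : u 0 = fc a := rfl
    have hus : ∀ n, u (n + 1) = fd (fc (u n)) := fun n => rfl
    have hstep : ∀ x ∈ Pk κ lam, x ⊆ fc x ∧ fc x ∈ C ∧ fc x ∈ Pk κ lam ∧
        fc x ⊆ fd (fc x) ∧ fd (fc x) ∈ D ∧ fd (fc x) ∈ Pk κ lam := by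
      intro x hx
      obtain ⟨h1, h2⟩ := hfc x hx
      have h3 : fc x ∈ Pk κ lam := hCP h1
      obtain ⟨h4, h5⟩ := hfd (fc x) h3
      exact ⟨h2, h1, h3, h5, h4, hDP h4⟩
    have hmem : ∀ n, u n ∈ Pk κ lam ∧ u n ⊆ u (n+1) ∧ (n = 0 → u n ∈ C) ∧ (n ≠ 0 → u n ∈ D) := by
      intro n
      induction n with
      | zero =>
        have h0 : fc a ∈ C := (hfc a ha).1
        have h0P : fc a ∈ Pk κ lam := hCP h0
        obtain ⟨_, _, _, h4, h5, h6⟩ := hstep a ha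
        refine ⟨h0P, ?_, fun _ => h0, fun h => absurd rfl h⟩
        rw [hus 0, hu0]
        obtain ⟨hh1, _, _, hh4, _, _⟩ := hstep (fc a) h0P
        exact hh1.trans hh4
      | succ n ih =>
        obtain ⟨hP, _, _, _⟩ := ih
        obtain ⟨h1, h2, h3, h4, h5, h6⟩ := hstep (u n) hP
        refine ⟨by rw [hus n]; exact h6, ?_, fun h => by omega, fun _ => by rw [hus n]; exact h5⟩
        rw [hus (n+1), hus n]
        obtain ⟨hh1, _, _, hh4, _, _⟩ := hstep (fd (fc (u n))) h6
        exact hh1.trans hh4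
    have humono : ∀ m n : ℕ, m ≤ n → u m ⊆ u n := by
      intro m n h
      induction n with
      | zero => simp_all
      | succ n ih =>
        rcases Nat.lt_or_ge m (n+1) with h' | h'
        · exact (ih (by omega)).trans (hmem n).2.1
        · have : m = n + 1 := by omega
          subst this; rfl
    -- the union
    refine ⟨⋃ n, u n, ⟨?_, ?_⟩, ?_⟩
    · -- in C : union over n of u n = union of (fc (u n)) chain
      have : (⋃ n, u n) = ⋃ n, fc (u n) := by
        apply Set.Subset.antisymm
        · exact Set.iUnion_mono fun n => (hstep (u n) (hmem n).1).1
        · refine Set.iUnion_subset fun n => ?_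
          have h1 : fc (u n) ⊆ u (n+1) := by
            rw [hus n]; exact (hstep (u n) (hmem n).1).2.2.2.1
          exact h1.trans (Set.subset_iUnion u (n+1))
      rw [this]
      refine club_iUnion_nat hκ ⟨hCP, hCcof, hCcl⟩ _ ?_ ?_
      · intro m n hmn
        have h1 : u m ⊆ u n := humono m n hmn
        -- fc(u m) ⊆ u (m+1) ⊆ u n ⊆ fc (u n)? Not monotone directly; use: fc (u m) ⊆ u (m+1) ⊆ u (n+1)… need fc(u n) ⊇ u (n) ⊇ u(m+1); but fc (u m) ⊆ u (m+1) ⊆ u n ⊆ fc (u n).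
        have h2 : fc (u m) ⊆ u (m+1) := by
          rw [hus m]; exact (hstep (u m) (hmem m).1).2.2.2.1
        have h3 : u n ⊆ fc (u n) := (hstep (u n) (hmem n).1).1
        rcases Nat.lt_or_ge m n with h' | h'
        · exact h2.trans ((humono (m+1) n (by omega)).trans h3)
        · have : m = n := by omega
          subst this; rfl
      · exact fun n => (hstep (u n) (hmem n).1).2.1
    · -- in D : union of u n = union of u (n+1), all in D
      have : (⋃ n, u n) = ⋃ n, u (n+1) := by
        apply Set.Subset.antisymm
        · exact Set.iUnion_mono fun n => (hmem n).2.1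
        · exact Set.iUnion_subset fun n => Set.subset_iUnion u (n+1)
      rw [this]
      refine club_iUnion_nat hκ ⟨hDP, hDcof, hDcl⟩ _
        (fun m n h => humono (m+1) (n+1) (by omega)) (fun n => (hmem (n+1)).2.2.2 (by omega))
    · exact ((hfc a ha).2).trans ((Set.subset_iUnion u 0).trans_eq rfl)
  · intro δ hδ0 hδ f hf hmono
    exact ⟨hCcl δ hδ0 hδ f (fun β hβ => (hf β hβ).1) hmono,
           hDcl δ hδ0 hδ f (fun β hβ => (hf β hβ).2) hmono⟩

end PkAux
namespace PkAux

variable {κ lam : Cardinal.{0}}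

/-- The set of closure points of a small continuous set-operator `F` is club. -/
lemma clF (hκ : κ.IsInaccessible) (F : Set Ordinal.{0} → Set Ordinal.{0})
    (hsmall : ∀ x ∈ Pk κ lam, F x ∈ Pk κ lam)
    (hcont : ∀ (δ : Ordinal.{0}), 0 < δ → ∀ u : Ordinal.{0} → Set Ordinal.{0},
      (∀ β γ, β ≤ γ → γ < δ → u β ⊆ u γ) →
      F (⋃ β ∈ Set.Iio δ, u β) ⊆ ⋃ β ∈ Set.Iio δ, F (u β)) :
    IsClubIn κ (Pk κ lam) {x ∈ Pk κ lam | F x ⊆ x} := by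
  refine ⟨fun x hx => hx.1, ?_, ?_⟩
  · intro a ha
    set u : ℕ → Set Ordinal := fun n => Nat.rec a (fun _ x => x ∪ F x) n with hu
    have hus : ∀ n, u (n+1) = u n ∪ F (u n) := fun n => rfl
    have huP : ∀ n, u n ∈ Pk κ lam := by
      intro n
      induction n with
      | zero => exact ha
      | succ n ih => exact Pk_union ih (hsmall _ ih) hκ
    have humono1 : ∀ n, u n ⊆ u (n+1) := fun n => by
      rw [hus n]; exact Set.subset_union_left
    have humono : ∀ m n : ℕ, m ≤ n → u m ⊆ u n := by
      intro m n h
      induction n with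
      | zero => simp_all
      | succ n ih =>
        rcases Nat.lt_or_ge m (n+1) with h' | h'
        · exact (ih (by omega)).trans (humono1 n)
        · have : m = n + 1 := by omega
          subst this; rfl
    have hchain : ∀ β γ : Ordinal.{0}, β ≤ γ → γ < Ordinal.omega0 →
        u (natOf β) ⊆ u (natOf γ) := by
      intro β γ hβγ hγ
      have hβ : β < Ordinal.omega0 := lt_of_le_of_lt hβγ hγ
      have h1 := natOf_spec hβ
      have h2 := natOf_spec hγ
      rw [h1, h2] at hβγ
      exact humono _ _ (by exact_mod_cast hβγ)
    have key : F (⋃ n, u n) ⊆ ⋃ n, u n := by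
      have h1 : F (⋃ n, u n) ⊆ ⋃ β ∈ Set.Iio Ordinal.omega0, F (u (natOf β)) := by
        rw [← iUnion_nat_eq (u := u)]
        exact hcont Ordinal.omega0 Ordinal.omega0_pos _ hchain
      refine h1.trans ?_
      intro α hα
      simp only [Set.mem_iUnion, Set.mem_Iio] at hα ⊢
      obtain ⟨β, _, h⟩ := hα
      refine ⟨natOf β + 1, ?_⟩
      rw [hus]
      exact Or.inr h
    refine ⟨⋃ n, u n, ⟨?_, key⟩, (Set.subset_iUnion u 0 : a ⊆ _)⟩
    rw [← iUnion_nat_eq (u := u)]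
    exact Pk_sUnion hκ (by simpa using hκ.1) _ (fun β _ => huP _)
  · intro δ hδ0 hδ f hf hmono
    refine ⟨Pk_sUnion hκ hδ f (fun β hβ => (hf β hβ).1), ?_⟩
    refine (hcont δ hδ0 f ?_).trans ?_
    · intro β γ hβγ hγ
      rcases eq_or_lt_of_le hβγ with rfl | h
      · rfl
      · exact hmono β γ hβγ hγ
    · refine Set.iUnion_subset fun β => Set.iUnion_subset fun hβ => ?_
      exact (hf β hβ).2.trans (Set.subset_biUnion_of_mem hβ)

end PkAux
namespace PkAux

variable {κ lam : Cardinal.{0}}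

lemma club_contains (hκ : κ.IsInaccessible) {w : Set Ordinal} (hw : w ∈ Pk κ lam) :
    IsClubIn κ (Pk κ lam) {x ∈ Pk κ lam | w ⊆ x} := by
  have h := clF hκ (fun _ => w) (fun x _ => hw) ?_
  · convert h using 2
  · intro δ hδ u hu α hα
    exact Set.mem_biUnion (Set.mem_Iio.2 hδ) hα

/-- the operator whose closure points have ordinal trace below `κ`. -/
def Ftr (κ : Cardinal.{0}) (x : Set Ordinal.{0}) : Set Ordinal.{0} :=
  ⋃ γ ∈ x ∩ Set.Iio κ.ord, Set.Iio γ

lemma club_trace (hκ : κ.IsInaccessible) (hle : κ ≤ lam) :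
    IsClubIn κ (Pk κ lam) {x ∈ Pk κ lam | Ftr κ x ⊆ x} := by
  refine clF hκ (Ftr κ) ?_ ?_
  · intro x hx
    constructor
    · intro α hα
      simp only [Ftr, Set.mem_iUnion, Set.mem_inter_iff, Set.mem_Iio] at hα
      obtain ⟨γ, ⟨_, hγκ⟩, hαγ⟩ := hα
      exact hαγ.trans (hγκ.trans_le (Cardinal.ord_le_ord.2 hle))
    · have : Ftr κ x = ⋃ i : ↥(x ∩ Set.Iio κ.ord), Set.Iio (i : Ordinal) := by
        simp [Ftr, Set.iUnion_subtype]
      rw [this]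
      have hι : #(↥(x ∩ Set.Iio κ.ord)) < Cardinal.lift.{1} κ :=
        (Cardinal.mk_le_mk_of_subset Set.inter_subset_left).trans_lt hx.2
      refine (Cardinal.mk_iUnion_le _).trans_lt
        (Cardinal.mul_lt_of_lt (laleph0 hκ).le hι ?_)
      refine Cardinal.iSup_lt_of_isRegular (lreg hκ) hι fun i => ?_
      rw [Ordinal.mk_Iio_ordinal]
      exact Cardinal.lift_lt.2 (Cardinal.lt_ord.1 i.2.2)
  · intro δ hδ u hu α hα
    simp only [Ftr, Set.mem_iUnion, Set.mem_inter_iff, Set.mem_Iio] at hα ⊢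
    obtain ⟨γ, ⟨hγu, hγκ⟩, hαγ⟩ := hα
    obtain ⟨β, hβδ, hγβ⟩ := hγu
    exact ⟨β, hβδ, γ, ⟨hγβ, hγκ⟩, hαγ⟩

lemma trace_eq_Iio {x : Set Ordinal} (h : Ftr κ x ⊆ x) :
    x ∩ Set.Iio κ.ord = Set.Iio (kapOf κ x) := by
  set D := x ∩ Set.Iio κ.ord with hD
  have hdc : ∀ γ ∈ D, Set.Iio γ ⊆ D := by
    intro γ hγ α hα
    exact ⟨h (Set.mem_biUnion hγ hα), Set.mem_Iio.2 (lt_trans (Set.mem_Iio.1 hα) (Set.mem_Iio.1 hγ.2))⟩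
  have hne : {b : Ordinal | D ⊆ Set.Iio b}.Nonempty := ⟨κ.ord, fun α hα => hα.2⟩
  have hmem : D ⊆ Set.Iio (sInf {b : Ordinal | D ⊆ Set.Iio b}) := csInf_mem hne
  apply Set.Subset.antisymm
  · rw [kapOf]; exact hmem
  · intro γ hγ
    by_contra hγD
    have hsub : D ⊆ Set.Iio γ := by
      intro δ hδ
      rcases lt_trichotomy δ γ with h' | rfl | h'
      · exact h'
      · exact absurd hδ hγD
      · exact absurd (hdc δ hδ h') hγD
    have : kapOf κ x ≤ γ := csInf_le' hsub
    exact absurd (hγ.trans_le this) (lt_irrefl _)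

lemma kapOf_eq {x : Set Ordinal} {β : Ordinal} (h : x ∩ Set.Iio κ.ord = Set.Iio β) :
    kapOf κ x = β := by
  rw [kapOf, h]
  apply le_antisymm
  · exact csInf_le' (fun _ h => h)
  · refine le_csInf ⟨β, fun _ h => h⟩ fun b hb => ?_
    by_contra hlt
    push_neg at hlt
    exact absurd (hb hlt) (lt_irrefl b)

/-- club of sets closed under an external enumeration `f` of a set `e`. -/
lemma club_code (hκ : κ.IsInaccessible) {e : Set Ordinal}
    (he : ∀ α ∈ e, α < lam.ord) (f : ↥(Set.Iio κ.ord) → ↥e) :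
    IsClubIn κ (Pk κ lam)
      {x ∈ Pk κ lam | (fun i : ↥(Set.Iio κ.ord) => (f i : Ordinal)) '' (Subtype.val ⁻¹' x) ⊆ x} := by
  refine clF hκ _ ?_ ?_
  · intro x hx
    constructor
    · rintro α ⟨i, _, rfl⟩
      exact he _ (f i).2
    · refine Cardinal.mk_image_le.trans_lt ?_
      exact (Cardinal.mk_preimage_of_injective _ _ Subtype.val_injective).trans_lt hx.2
  · intro δ hδ u hu α hα
    obtain ⟨i, hi, rfl⟩ := hα
    simp only [Set.mem_preimage] at hi
    obtain ⟨β, hβδ, hiβ⟩ := Set.mem_iUnion₂.1 hi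
    exact Set.mem_biUnion hβδ ⟨i, hiβ, rfl⟩

end PkAux
namespace PkAux
open FirstOrder

/-- the language of orders together with its Skolem functions. -/
abbrev LL : FirstOrder.Language := Language.order.sum Language.order.skolem₁

/-- the order structure on the ordinals below `lam.ord`. -/
@[reducible] noncomputable def ordStr (lam : Cardinal.{0}) :
    Language.order.Structure ↥(Set.Iio lam.ord) := Language.orderStructure _

/-- the Skolemized structure on the ordinals below `lam.ord`. -/
@[reducible] noncomputable def sumStr (lam : Cardinal.{0}) (h0 : (0:Ordinal.{0}) < lam.ord) :
    LL.Structure ↥(Set.Iio lam.ord) :=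
  letI := ordStr lam
  haveI : Nonempty ↥(Set.Iio lam.ord) := ⟨⟨0, h0⟩⟩
  inferInstance

/-- `x` is closed under the Skolem functions. -/
def Scl (lam : Cardinal.{0}) (h0 : (0:Ordinal.{0}) < lam.ord) (x : Set Ordinal.{0}) : Prop :=
  ∀ (n : ℕ) (G : LL.Functions n) (args : Fin n → ↥(Set.Iio lam.ord)),
    (∀ i, ((args i : ↥(Set.Iio lam.ord)) : Ordinal) ∈ x) →
    ((@Language.Structure.funMap LL ↥(Set.Iio lam.ord) (sumStr lam h0) n G args :
        ↥(Set.Iio lam.ord)) : Ordinal) ∈ x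

variable {κ lam : Cardinal.{0}}

lemma club_scl (hκ : κ.IsInaccessible) (h0 : (0:Ordinal.{0}) < lam.ord) :
    IsClubIn κ (Pk κ lam) {x ∈ Pk κ lam | Scl lam h0 x} := by
  haveI : Nonempty ↥(Set.Iio lam.ord) := ⟨⟨0, h0⟩⟩
  letI iO : Language.order.Structure ↥(Set.Iio lam.ord) := ordStr lam
  letI iS : LL.Structure ↥(Set.Iio lam.ord) := sumStr lam h0
  refine ⟨fun x hx => hx.1, ?_, ?_⟩
  · -- cofinality, via Skolem hulls
    intro a ha
    set s : Set ↥(Set.Iio lam.ord) := Subtype.val ⁻¹' a with hs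
    set T := Language.Substructure.closure LL s with hT
    refine ⟨Subtype.val '' (T : Set ↥(Set.Iio lam.ord)), ⟨⟨?_, ?_⟩, ?_⟩, ?_⟩
    · rintro α ⟨m, _, rfl⟩
      exact m.2
    · -- cardinality
      rw [Cardinal.mk_image_eq Subtype.val_injective]
      have h1 := Language.Substructure.lift_card_closure_le (L := LL) (s := s)
      rw [Cardinal.lift_uzero] at h1
      refine h1.trans_lt (max_lt (laleph0 hκ) ?_)
      refine (Cardinal.add_lt_of_lt (laleph0 hκ).le ?_ ?_)
      · rw [Cardinal.lift_uzero]
        exact (Cardinal.mk_preimage_of_injective _ _ Subtype.val_injective).trans_lt ha.2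
      · refine lt_of_le_of_lt ?_ (laleph0 hκ)
        have h2 := Language.card_functions_sum_skolem₁_le (L := Language.order)
        rw [Language.order.card_eq_one] at h2
        have h3 : (max ℵ₀ 1 : Cardinal.{0}) = ℵ₀ := max_eq_left Cardinal.one_le_aleph0
        rw [h3] at h2
        calc Cardinal.lift.{1,0} #(Σ i, LL.Functions i) ≤ Cardinal.lift.{1,0} ℵ₀ :=
              Cardinal.lift_le.2 h2
          _ = ℵ₀ := by simp
    · -- Skolem closed
      intro n G args hargs
      have hmem : ∀ i, args i ∈ T := by
        intro i
        obtain ⟨m, hm, hval⟩ := hargs i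
        rwa [Subtype.val_injective hval] at hm
      exact ⟨Language.Structure.funMap G args, T.fun_mem G args hmem, rfl⟩
    · intro α hα
      have : (⟨α, ha.1 α hα⟩ : ↥(Set.Iio lam.ord)) ∈ s := hα
      exact ⟨_, Language.Substructure.subset_closure this, rfl⟩
  · -- chain closure
    intro δ hδ0 hδ f hf hmono
    refine ⟨Pk_sUnion hκ hδ f (fun β hβ => (hf β hβ).1), ?_⟩
    intro n G args hargs
    have hchoice : ∀ i : Fin n, ∃ β, β < δ ∧ ((args i : ↥(Set.Iio lam.ord)) : Ordinal) ∈ f β := by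
      intro i
      obtain ⟨β, hβ, h⟩ := Set.mem_iUnion₂.1 (hargs i)
      exact ⟨β, hβ, h⟩
    choose b hb1 hb2 using hchoice
    set β' : Ordinal := Finset.sup Finset.univ b with hβ'
    have hβ'δ : β' < δ := by
      rw [hβ', Finset.sup_lt_iff (show ⊥ < δ from hδ0)]
      exact fun i _ => hb1 i
    have hargs' : ∀ i, ((args i : ↥(Set.Iio lam.ord)) : Ordinal) ∈ f β' := by
      intro i
      exact hmono (b i) β' (Finset.le_sup (Finset.mem_univ i)) hβ'δ (hb2 i)
    exact Set.mem_biUnion hβ'δ ((hf β' hβ'δ).2 n G args hargs')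

end PkAux
namespace PkAux
open FirstOrder

variable {κ lam : Cardinal.{0}}

lemma scl_elem (h0 : (0:Ordinal.{0}) < lam.ord) {x : Set Ordinal}
    (hx : ∀ α ∈ x, α < lam.ord) (hscl : Scl lam h0 x) : ElemSubOrd lam.ord x := by
  haveI : Nonempty ↥(Set.Iio lam.ord) := ⟨⟨0, h0⟩⟩
  letI iO : Language.order.Structure ↥(Set.Iio lam.ord) := ordStr lam
  letI iS : LL.Structure ↥(Set.Iio lam.ord) := sumStr lam h0
  letI iOx : Language.order.Structure ↥x := Language.orderStructure _
  letI iOSM : Language.order.OrderedStructure ↥(Set.Iio lam.ord) := ⟨fun v => Iff.rfl⟩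
  letI iOSx : Language.order.OrderedStructure ↥x := ⟨fun v => Iff.rfl⟩
  have hsub : x ⊆ Set.Iio lam.ord := fun α hα => hx α hα
  -- the substructure
  set S : LL.Substructure ↥(Set.Iio lam.ord) :=
    ⟨Subtype.val ⁻¹' x, fun {n} G v hv => hscl n G v hv⟩ with hS
  set R : Language.order.Substructure ↥(Set.Iio lam.ord) :=
    Language.LHom.sumInl.substructureReduct S with hR
  have hElem : R.IsElementary := Language.Substructure.skolem₁_reduct_isElementary S
  have hmemR : ∀ m : ↥(Set.Iio lam.ord), m ∈ R ↔ (m : Ordinal) ∈ x := fun m => Iff.rfl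
  -- the order isomorphism
  set g : ↥x ≃o ↥R :=
    { toFun := fun a => ⟨⟨(a : Ordinal), hsub a.2⟩, a.2⟩
      invFun := fun b => ⟨((b : ↥(Set.Iio lam.ord)) : Ordinal), b.2⟩
      left_inv := fun a => Subtype.ext rfl
      right_inv := fun b => Subtype.ext (Subtype.ext rfl)
      map_rel_iff' := Iff.rfl } with hg
  refine ⟨hsub, ?_⟩
  intro n φ v
  have h1 : φ.Realize (⇑g ∘ v) ↔ φ.Realize v :=
    Language.StrongHomClass.realize_formula g φ
  have h2 : φ.Realize ((Subtype.val : ↥R → ↥(Set.Iio lam.ord)) ∘ (⇑g ∘ v)) ↔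
      φ.Realize (⇑g ∘ v) := hElem φ (⇑g ∘ v)
  have h3 : (Subtype.val : ↥R → ↥(Set.Iio lam.ord)) ∘ (⇑g ∘ v) =
      fun i => Set.inclusion hsub (v i) := by
    funext i
    rfl
  rw [h3] at h2
  rw [← h1, h2]
end PkAux
namespace PkAux

variable {κ lam : Cardinal.{0}}

/-- the witness predicate for failure of closure under `g`. -/
def Hyp (κ : Cardinal.{0}) (g : Set Ordinal.{0} → Set Ordinal.{0}) (a : Set Ordinal.{0}) : Prop :=
  ∃ z, z ⊆ a ∧ #z < Cardinal.lift.{1} (kapOf κ a).card ∧ ¬ g z ⊆ a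

/-- the effable thin list. -/
noncomputable def dL (κ : Cardinal.{0}) (g : Set Ordinal.{0} → Set Ordinal.{0})
    (a : Set Ordinal.{0}) : Set Ordinal.{0} :=
  open scoped Classical in
  if h : Hyp κ g a then h.choose else ∅

lemma dL_subset {g : Set Ordinal → Set Ordinal} {a : Set Ordinal} : dL κ g a ⊆ a := by
  rw [dL]
  split
  · next h => exact h.choose_spec.1
  · exact Set.empty_subset a

lemma dL_spec {g : Set Ordinal → Set Ordinal} {a : Set Ordinal} (h : Hyp κ g a) :
    dL κ g a ⊆ a ∧ #(dL κ g a) < Cardinal.lift.{1} (kapOf κ a).card ∧ ¬ g (dL κ g a) ⊆ a := by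
  rw [dL, dif_pos h]
  exact h.choose_spec

lemma dL_list (g : Set Ordinal → Set Ordinal) : IsList κ lam (dL κ g) :=
  fun _ _ => dL_subset

lemma dL_thin (hκ : κ.IsInaccessible) (g : Set Ordinal → Set Ordinal) :
    IsThin κ lam (dL κ g) := by
  refine ⟨Pk κ lam, Pk_club hκ, ?_⟩
  intro c hc
  have hsub : {x : Set Ordinal | ∃ a ∈ Pk κ lam, c ⊆ a ∧ x = dL κ g a ∩ c} ⊆ 𝒫 c := by
    rintro x ⟨a, _, _, rfl⟩
    exact Set.inter_subset_right
  refine (Cardinal.mk_le_mk_of_subset hsub).trans_lt ?_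
  rw [Cardinal.mk_powerset]
  exact lsl hκ _ hc.2

end PkAux
theorem closure_under_g_in_FIT (κ lam : Cardinal.{0})
    (hκ : κ.IsInaccessible) (hle : κ ≤ lam)
    (g : Set Ordinal → Set Ordinal) (hg : ∀ a ∈ Pk κ lam, g a ∈ Pk κ lam) :
    {a ∈ P'k κ lam |
        ∀ z, z ⊆ a → #z < Cardinal.lift.{1} (kapOf κ a).card → g z ⊆ a} ∈
      FIT κ lam := by
  classical
  open PkAux in
  have h0 : (0 : Ordinal.{0}) < lam.ord := by
    have hl0 : (0 : Cardinal) < lam := lt_of_lt_of_le (Cardinal.aleph0_pos.trans hκ.1) hle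
    simpa using Cardinal.ord_lt_ord.2 hl0
  set A := {a ∈ P'k κ lam |
      ∀ z, z ⊆ a → #z < Cardinal.lift.{1} (kapOf κ a).card → g z ⊆ a} with hA
  have hAP : A ⊆ Pk κ lam := fun a ha => ha.1.1
  refine ⟨hAP, Set.diff_subset, dL κ g, dL_list g, dL_thin hκ g, ?_⟩
  -- effability
  intro S hSB hstat
  by_contra hcon
  push_neg at hcon
  obtain ⟨hSsub, hmeets⟩ := hstat
  set C₀ := ({x ∈ Pk κ lam | PkAux.Ftr κ x ⊆ x} ∩ {x ∈ Pk κ lam | PkAux.Scl lam h0 x})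
    with hC₀
  have hC₀club : IsClubIn κ (Pk κ lam) C₀ :=
    PkAux.club_inter hκ (PkAux.club_trace hκ hle) (PkAux.club_scl hκ h0)
  -- meeting S ∩ C₀ ∩ D for any club D
  have hmeet : ∀ D, IsClubIn κ (Pk κ lam) D → ∃ a, a ∈ S ∧ a ∈ C₀ ∧ a ∈ D := by
    intro D hD
    obtain ⟨a, haS, haC⟩ := hmeets _ (PkAux.club_inter hκ hC₀club hD)
    exact ⟨a, haS, haC.1, haC.2⟩
  -- members of S ∩ C₀ satisfy the witness hypothesis
  have hwit : ∀ a, a ∈ S → a ∈ C₀ → PkAux.Hyp κ g a := by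
    intro a haS haC
    have haPk : a ∈ Pk κ lam := hSB haS |>.1
    have haP' : a ∈ P'k κ lam := by
      refine ⟨haPk, ⟨kapOf κ a, PkAux.trace_eq_Iio haC.1.2⟩, ?_⟩
      exact PkAux.scl_elem h0 haPk.1 haC.2.2
    have hnA : a ∉ A := (hSB haS).2
    by_contra hnh
    rw [PkAux.Hyp] at hnh
    push_neg at hnh
    exact hnA ⟨haP', fun z hz1 hz2 => hnh z hz1 hz2⟩
  -- coherence of the list along S
  have hcoh : ∀ a b : Set Ordinal, a ∈ S → b ∈ S → a ⊆ b → dL κ g a = dL κ g b ∩ a :=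
    fun a b ha hb hab => hcon a ha b hb hab
  set e := ⋃ a ∈ S ∩ C₀, dL κ g a with he
  have he_lam : ∀ α ∈ e, α < lam.ord := by
    intro α hα
    obtain ⟨a, ha, hα⟩ := Set.mem_iUnion₂.1 hα
    exact (hSB ha.1).1.1 α (PkAux.dL_subset hα)
  -- the branch restricted to any member of S ∩ C₀ is its list value
  have hF3 : ∀ a, a ∈ S → a ∈ C₀ → e ∩ a = dL κ g a := by
    intro a haS haC
    apply Set.Subset.antisymm
    · rintro α ⟨hαe, hαa⟩
      obtain ⟨b, hb, hαb⟩ := Set.mem_iUnion₂.1 hαe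
      have hab : a ∪ b ∈ Pk κ lam := PkAux.Pk_union (hSB haS).1 (hSB hb.1).1 hκ
      obtain ⟨c, hcS, hcC, hcD⟩ := hmeet _ (PkAux.club_contains hκ hab)
      have hac : a ⊆ c := (Set.subset_union_left).trans hcD.2
      have hbc : b ⊆ c := (Set.subset_union_right).trans hcD.2
      have h1 : dL κ g b = dL κ g c ∩ b := hcoh b c hb.1 hcS hbc
      have h2 : dL κ g a = dL κ g c ∩ a := hcoh a c haS hcS hac
      rw [h2]
      rw [h1] at hαb
      exact ⟨hαb.1, hαa⟩
    · intro α hα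
      exact ⟨Set.mem_biUnion (⟨haS, haC⟩ : a ∈ S ∩ C₀) hα, PkAux.dL_subset hα⟩
  -- the branch is small
  have hecard : #(↥e) < Cardinal.lift.{1} κ := by
    by_contra hbig
    push_neg at hbig
    have hle2 : #(↥(Set.Iio κ.ord)) ≤ #(↥e) := by
      rwa [Ordinal.mk_Iio_ordinal, Cardinal.card_ord]
    obtain ⟨f⟩ := (Cardinal.le_def _ _).1 hle2
    obtain ⟨a, haS, haC, haD⟩ := hmeet _ (PkAux.club_code hκ he_lam f)
    have htr : a ∩ Set.Iio κ.ord = Set.Iio (kapOf κ a) := PkAux.trace_eq_Iio haC.1.2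
    set β := kapOf κ a with hβ
    have hβκ : β ≤ κ.ord := by
      by_contra hlt
      push_neg at hlt
      have h' : κ.ord ∈ a ∩ Set.Iio κ.ord := by
        rw [htr]; exact Set.mem_Iio.2 hlt
      exact absurd (Set.mem_Iio.1 h'.2) (lt_irrefl _)
    have hda : e ∩ a = dL κ g a := hF3 a haS haC
    have hemba : ∀ i : ↥(Set.Iio β), ((f ⟨i.1, lt_of_lt_of_le i.2 hβκ⟩ : ↥e) : Ordinal) ∈
        dL κ g a := by
      intro i
      rw [← hda]
      refine ⟨(f _).2, ?_⟩
      refine haD.2 ⟨⟨i.1, lt_of_lt_of_le i.2 hβκ⟩, ?_, rfl⟩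
      have h' : i.1 ∈ a ∩ Set.Iio κ.ord := by
        rw [htr]; exact i.2
      exact h'.1
    have hinj : Function.Injective
        (fun i : ↥(Set.Iio β) => (⟨_, hemba i⟩ : ↥(dL κ g a))) := by
      intro i j hij
      have h1 := congrArg Subtype.val hij
      have h2 := f.injective (Subtype.ext h1)
      have h3 := congrArg Subtype.val h2
      exact Subtype.ext h3
    have hcard1 : Cardinal.lift.{1} β.card ≤ #(↥(dL κ g a)) := by
      rw [← Ordinal.mk_Iio_ordinal]
      exact Cardinal.mk_le_of_injective hinj
    have hcard2 := (PkAux.dL_spec (hwit a haS haC)).2.1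
    rw [← hβ] at hcard2
    exact absurd (hcard1.trans_lt hcard2) (lt_irrefl _)
  -- conclude
  have hePk : e ∈ Pk κ lam := ⟨he_lam, hecard⟩
  have hwPk : e ∪ g e ∈ Pk κ lam := PkAux.Pk_union hePk (hg e hePk) hκ
  obtain ⟨a, haS, haC, haD⟩ := hmeet _ (PkAux.club_contains hκ hwPk)
  have hea : e ⊆ a := (Set.subset_union_left).trans haD.2
  have hga : g e ⊆ a := (Set.subset_union_right).trans haD.2
  have hda : dL κ g a = e := by
    rw [← hF3 a haS haC]
    exact Set.inter_eq_self_of_subset_left hea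
  have hspec := (PkAux.dL_spec (hwit a haS haC)).2.2
  rw [hda] at hspec
  exact hspec hga
end

section
/- Suppose κ is a supercompact cardinal. Then □_{cof(<κ)}(κ,λ) fails for every cardinal λ ≥ κ with cf(λ) ≥ κ; in particular, □(λ) (that is, □_λ(2,λ)) fails for every λ ≥ κ with cf(λ) ≥ κ. -/
open Cardinal Set

/-! ### Auxiliary machinery for the failure of square above a supercompact -/

section SquareFails

open Ordinal

variable {κ lam : Cardinal.{0}} {U : Set (Set (Set Ordinal.{0}))}

private lemma UF.nonempty (hUF : IsUFOn (Pk κ lam) U) {A : Set (Set Ordinal)}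
    (hA : A ∈ U) : A.Nonempty := by
  rw [Set.nonempty_iff_ne_empty]
  rintro rfl
  exact hUF.2.2.1 hA

/-- Reindex a small set of ordinals by a small type in universe 0. -/
private lemma small_index {κ : Cardinal.{0}} (a : Set Ordinal.{0})
    (h : #a < Cardinal.lift.{1} κ) :
    ∃ (ι : Type) (f : ι → Ordinal.{0}), Set.range f = a ∧ #ι < κ := by
  obtain ⟨c, hc, hlc⟩ := Cardinal.lt_lift_iff.1 h
  have hmk : Cardinal.lift.{1} #c.out = Cardinal.lift.{0} #(↥a) := by
    simp [Cardinal.mk_out, hlc]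
  obtain ⟨e⟩ : Nonempty (c.out ≃ ↥a) := Cardinal.lift_mk_eq'.1 hmk
  refine ⟨c.out, fun i => (e i : Ordinal), ?_, by rwa [Cardinal.mk_out]⟩
  ext x
  constructor
  · rintro ⟨i, rfl⟩; exact (e i).2
  · intro hx; exact ⟨e.symm ⟨x, hx⟩, by simp⟩

/-- Intersections of `< κ` many members of a `κ`-complete ultrafilter. -/
private lemma inter_index (hK : KComplete κ (Pk κ lam) U) {ι : Type}
    (A : ι → Set (Set Ordinal)) (hι : #ι < κ) (hA : ∀ i, A i ∈ U) :
    (Pk κ lam ∩ ⋂ i, A i) ∈ U := by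
  have hsub : Set.range A ⊆ U := by rintro _ ⟨i, rfl⟩; exact hA i
  have hcard : #(Set.range A) < Cardinal.lift.{1} κ := by
    have h1 : #(Set.range A) ≤ Cardinal.lift.{1} #ι := by
      simpa using Cardinal.mk_range_le_lift (f := A)
    exact h1.trans_lt (Cardinal.lift_lt.2 hι)
  have := hK _ hsub hcard
  rwa [Set.sInter_range] at this

/-- Partition a member of `U` into fewer than `κ` pieces: one piece is in `U`. -/
private lemma part_lemma (hUF : IsUFOn (Pk κ lam) U) (hK : KComplete κ (Pk κ lam) U)
    {B : Set (Set Ordinal)} (hB : B ∈ U) {T : Set (Set Ordinal)}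
    (hT : #T < Cardinal.lift.{1} κ) (g : Set Ordinal → Set Ordinal)
    (hg : ∀ a ∈ B, g a ∈ T) :
    ∃ e ∈ T, {a | a ∈ B ∧ g a = e} ∈ U := by
  by_contra hcon
  push_neg at hcon
  have hPsub : ∀ e : Set Ordinal, {a | a ∈ B ∧ g a = e} ⊆ Pk κ lam :=
    fun e a ha => hUF.1 B hB ha.1
  have hcomp : ∀ e ∈ T, Pk κ lam \ {a | a ∈ B ∧ g a = e} ∈ U := fun e he =>
    (hUF.2.2.2.2.2 _ (hPsub e)).resolve_left (hcon e he)
  have hsub : (fun e => Pk κ lam \ {a | a ∈ B ∧ g a = e}) '' T ⊆ U := by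
    rintro _ ⟨e, he, rfl⟩; exact hcomp e he
  have hcard : #((fun e => Pk κ lam \ {a | a ∈ B ∧ g a = e}) '' T) <
      Cardinal.lift.{1} κ := Cardinal.mk_image_le.trans_lt hT
  have hK' := hK _ hsub hcard
  rw [Set.sInter_image] at hK'
  have hBint : B ∩ (Pk κ lam ∩ ⋂ e ∈ T, Pk κ lam \ {a | a ∈ B ∧ g a = e}) ∈ U :=
    hUF.2.2.2.2.1 _ hB _ hK'
  obtain ⟨a, haB, -, ha⟩ := UF.nonempty hUF hBint
  exact (Set.mem_iInter₂.1 ha (g a) (hg a haB)).2 ⟨haB, rfl⟩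

/-- Pressing-down for a normal ultrafilter. -/
private lemma press_lemma (hUF : IsUFOn (Pk κ lam) U) (hN : NormalUF κ lam U)
    {B : Set (Set Ordinal)} (hB : B ∈ U) (f : Set Ordinal → Ordinal)
    (hf : ∀ a ∈ B, f a ∈ a) :
    ∃ x, {a | a ∈ B ∧ f a = x} ∈ U := by
  by_contra hcon
  push_neg at hcon
  have hA : ∀ x : Ordinal, x < lam.ord → Pk κ lam \ {a | a ∈ B ∧ f a = x} ∈ U :=
    fun x _ =>
      (hUF.2.2.2.2.2 _ (fun a ha => hUF.1 B hB ha.1)).resolve_left (hcon x)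
  have hD := hN (fun x => Pk κ lam \ {a | a ∈ B ∧ f a = x}) hA
  have hBint : B ∩ {a ∈ Pk κ lam |
      ∀ x ∈ a, a ∈ Pk κ lam \ {a | a ∈ B ∧ f a = x}} ∈ U :=
    hUF.2.2.2.2.1 _ hB _ hD
  obtain ⟨a, haB, -, ha⟩ := UF.nonempty hUF hBint
  exact (ha (f a) (hf a haB)).2 ⟨haB, rfl⟩

set_option maxHeartbeats 1000000 in
/-- The main construction: from a normal fine `κ`-complete ultrafilter on `P_κ λ`
and a coherent sequence of clubs on `E ⊇ cof(<κ)`, we construct a thread. -/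
private lemma exists_thread
    (hunc : ℵ₀ < κ) (hklam : κ ≤ lam) (hcof : κ ≤ lam.ord.cof)
    (hUF : IsUFOn (Pk κ lam) U) (hK : KComplete κ (Pk κ lam) U)
    (hF : Fine κ lam U) (hN : NormalUF κ lam U)
    (E : Set Ordinal) (𝒞 : Ordinal → Set (Set Ordinal))
    (hE : ∀ δ : Ordinal, δ < lam.ord → δ.cof < κ → Order.IsSuccLimit δ → δ ∈ E)
    (hseq : ∀ α, Order.IsSuccLimit α → α ∈ E → α < lam.ord →
      ((𝒞 α).Nonempty ∧ #(𝒞 α) < Cardinal.lift.{1} κ) ∧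
        ∀ C ∈ 𝒞 α, OrdClub α C ∧ ∀ β, IsLimPt C β → β ∈ E → C ∩ Set.Iio β ∈ 𝒞 β) :
    ∃ D, OrdClub lam.ord D ∧
      ∀ δ, IsLimPt D δ → δ ∈ E → δ < lam.ord → D ∩ Set.Iio δ ∈ 𝒞 δ := by
  classical
  have haleph : ℵ₀ ≤ lam := hunc.le.trans hklam
  have hlimord : Order.IsSuccLimit lam.ord := Cardinal.isSuccLimit_ord haleph
  have hupd := hUF.2.2.2.2.1  -- pairwise intersections
  have hup := hUF.2.2.2.1     -- upward closure
  -- the good set G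
  set G : Set (Set Ordinal) := {a | a ∈ Pk κ lam ∧ 0 ∈ a ∧ ∀ x ∈ a, ∃ y ∈ a, x < y}
    with hGdef
  have hGsub : G ⊆ Pk κ lam := fun a ha => ha.1
  have hG : G ∈ U := by
    set B : Set (Set Ordinal) := {a | a ∈ Pk κ lam ∧ ∃ x ∈ a, ∀ y ∈ a, y ≤ x}
      with hBdef
    have hBnot : B ∉ U := by
      intro hBU
      set f : Set Ordinal → Ordinal :=
        fun a => if h : ∃ x ∈ a, ∀ y ∈ a, y ≤ x then h.choose else 0 with hfdef
      have hf : ∀ a ∈ B, f a ∈ a ∧ ∀ y ∈ a, y ≤ f a := by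
        intro a ha
        simp only [hfdef, dif_pos ha.2]
        exact ⟨ha.2.choose_spec.1, ha.2.choose_spec.2⟩
      obtain ⟨x₀, hx₀⟩ := press_lemma hUF hN hBU f (fun a ha => (hf a ha).1)
      obtain ⟨a₀, ha₀⟩ := UF.nonempty hUF hx₀
      have hx₀lam : x₀ < lam.ord := by
        have h1 := (hf a₀ ha₀.1).1
        rw [ha₀.2] at h1
        exact ha₀.1.1.1 x₀ h1
      have hsucc : Order.succ x₀ < lam.ord := hlimord.succ_lt hx₀lam
      obtain ⟨a, ha1, ha2⟩ := UF.nonempty hUF (hupd _ hx₀ _ (hF _ hsucc))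
      have hle := (hf a ha1.1).2 _ ha2.2
      rw [ha1.2] at hle
      exact lt_irrefl _ (Order.succ_le_iff.1 hle)
    have hXB : Pk κ lam \ B ∈ U :=
      (hUF.2.2.2.2.2 B (fun a ha => ha.1)).resolve_left hBnot
    have h0 : {a ∈ Pk κ lam | (0 : Ordinal) ∈ a} ∈ U := hF 0 hlimord.pos
    refine hup _ (hupd _ hXB _ h0) _ ?_ hGsub
    rintro a ⟨⟨haX, haB⟩, -, ha0⟩
    refine ⟨haX, ha0, ?_⟩
    intro x hx
    by_contra hcon
    push_neg at hcon
    exact haB ⟨haX, x, hx, hcon⟩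
  -- facts about sSup a for a ∈ G
  have hGbdd : ∀ a ∈ G, BddAbove a := fun a ha =>
    ⟨lam.ord, fun x hx => (ha.1.1 x hx).le⟩
  have hGne : ∀ a ∈ G, a.Nonempty := fun a ha => ⟨0, ha.2.1⟩
  have hGlt : ∀ a ∈ G, ∀ x ∈ a, x < sSup a := by
    intro a ha x hx
    obtain ⟨y, hy, hxy⟩ := ha.2.2 x hx
    exact hxy.trans_le (le_csSup (hGbdd a ha) hy)
  have hGlim : ∀ a ∈ G, Order.IsSuccLimit (sSup a) := by
    intro a ha
    rw [Ordinal.isSuccLimit_iff]; refine ⟨?_, Order.isSuccPrelimit_of_succ_lt ?_⟩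
    · exact (hGlt a ha 0 ha.2.1).ne'
    · intro b hb
      obtain ⟨x, hx, hbx⟩ := (lt_csSup_iff (hGbdd a ha) (hGne a ha)).1 hb
      exact lt_of_le_of_lt (Order.succ_le_of_lt hbx) (hGlt a ha x hx)
  have hGlam : ∀ a ∈ G, sSup a < lam.ord := by
    intro a ha
    obtain ⟨ι, f, hrange, hι⟩ := small_index (κ := κ) a ha.1.2
    have hsup : sSup a = iSup f := by rw [← hrange]; rfl
    rw [hsup]
    exact Ordinal.iSup_lt_ord (hι.trans_le hcof)
      (fun i => ha.1.1 _ (hrange ▸ Set.mem_range_self i))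
  have hGcof : ∀ a ∈ G, (sSup a).cof < κ := by
    intro a ha
    obtain ⟨ι, f, hrange, hι⟩ := small_index (κ := κ) a ha.1.2
    have hsup : sSup a = iSup f := by rw [← hrange]; rfl
    rw [hsup]
    refine (Ordinal.cof_iSup_le ?_).trans_lt hι
    intro i
    rw [← hsup]
    exact hGlt a ha _ (hrange ▸ Set.mem_range_self i)
  -- choose clubs
  set Cc : Set Ordinal → Set Ordinal :=
    fun a => if h : (𝒞 (sSup a)).Nonempty then h.choose else ∅ with hCcdef
  have hsupE : ∀ a ∈ G, sSup a ∈ E := fun a ha =>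
    hE _ (hGlam a ha) (hGcof a ha) (hGlim a ha)
  have hCc : ∀ a ∈ G, Cc a ∈ 𝒞 (sSup a) := by
    intro a ha
    have hne := (hseq _ (hGlim a ha) (hsupE a ha) (hGlam a ha)).1.1
    simp only [hCcdef, dif_pos hne]
    exact hne.choose_spec
  have hclub : ∀ a ∈ G, OrdClub (sSup a) (Cc a) := fun a ha =>
    ((hseq _ (hGlim a ha) (hsupE a ha) (hGlam a ha)).2 _ (hCc a ha)).1
  have hcoh : ∀ a ∈ G, ∀ β, IsLimPt (Cc a) β → β ∈ E → Cc a ∩ Set.Iio β ∈ 𝒞 β :=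
    fun a ha => ((hseq _ (hGlim a ha) (hsupE a ha) (hGlam a ha)).2 _ (hCc a ha)).2
  -- the thread
  set D : Set Ordinal := {β | β < lam.ord ∧ {a | a ∈ G ∧ β ∈ Cc a} ∈ U} with hDdef
  have hmemsub : ∀ β : Ordinal, {a | a ∈ G ∧ β ∈ Cc a} ⊆ Pk κ lam :=
    fun β a ha => hGsub ha.1
  -- hitting lemma
  have hit : ∀ β < lam.ord, ∃ β', β < β' ∧ β' < lam.ord ∧
      {a | a ∈ G ∧ (Cc a ∩ Set.Ioo β β').Nonempty} ∈ U := by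
    intro β hβ
    have hB₁ : G ∩ {a ∈ Pk κ lam | β ∈ a} ∈ U := hupd _ hG _ (hF β hβ)
    have key : ∀ a ∈ G ∩ {a ∈ Pk κ lam | β ∈ a},
        ∃ x ∈ a, (Cc a ∩ Set.Ioo β x).Nonempty := by
      rintro a ⟨haG, -, haβ⟩
      have hβs : β < sSup a := hGlt a haG β haβ
      have hsucc : Order.succ β < sSup a := (hGlim a haG).succ_lt hβs
      obtain ⟨η, hη, hβη⟩ := (hclub a haG).2.1 _ hsucc
      have hηs : η < sSup a := (hclub a haG).1 hη
      obtain ⟨x, hx, hηx⟩ := (lt_csSup_iff (hGbdd a haG) (hGne a haG)).1 hηs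
      exact ⟨x, hx, η, hη, Order.succ_le_iff.1 hβη, hηx⟩
    set g : Set Ordinal → Ordinal :=
      fun a => if h : ∃ x ∈ a, (Cc a ∩ Set.Ioo β x).Nonempty then h.choose else 0
      with hgdef
    have hg : ∀ a ∈ G ∩ {a ∈ Pk κ lam | β ∈ a},
        g a ∈ a ∧ (Cc a ∩ Set.Ioo β (g a)).Nonempty := by
      intro a ha
      have h := key a ha
      simp only [hgdef, dif_pos h]
      exact ⟨h.choose_spec.1, h.choose_spec.2⟩
    obtain ⟨x₀, hx₀⟩ := press_lemma hUF hN hB₁ g (fun a ha => (hg a ha).1)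
    obtain ⟨a₀, ha₀⟩ := UF.nonempty hUF hx₀
    have hx₀lam : x₀ < lam.ord := by
      have h1 := (hg a₀ ha₀.1).1
      rw [ha₀.2] at h1
      exact ha₀.1.1.1.1 x₀ h1
    have hx₀β : β < x₀ := by
      have h2 := (hg a₀ ha₀.1).2
      rw [ha₀.2] at h2
      obtain ⟨η, -, hβη, hηx⟩ := h2
      exact hβη.trans hηx
    refine ⟨x₀, hx₀β, hx₀lam, hup _ hx₀ _ ?_ (fun a ha => hGsub ha.1)⟩
    rintro a ⟨ha, hax⟩
    refine ⟨ha.1, ?_⟩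
    rw [← hax]
    exact (hg a ha).2
  -- the thread works at limit points of D of small cofinality
  have thread : ∀ δ : Ordinal, Order.IsSuccLimit δ → δ < lam.ord → δ.cof < κ →
      sSup (D ∩ Set.Iio δ) = δ → δ ∈ D ∧ D ∩ Set.Iio δ ∈ 𝒞 δ := by
    intro δ hδlim hδlam hδcof hsupδ
    have hδE : δ ∈ E := hE δ hδlam hδcof hδlim
    obtain ⟨ι, f, hlsub, hι⟩ := Ordinal.exists_lsub_cof δ
    have hικ : #ι < κ := by rw [hι]; exact hδcof
    have hιne : Nonempty ι := by
      rw [← Cardinal.mk_ne_zero_iff]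
      rw [hι]
      exact (Cardinal.aleph0_pos.trans_le (Ordinal.aleph0_le_cof.2 hδlim)).ne'
    have hDne : (D ∩ Set.Iio δ).Nonempty := by
      rw [Set.nonempty_iff_ne_empty]
      intro h
      rw [h, csSup_empty, Ordinal.bot_eq_zero] at hsupδ
      exact hδlim.pos.ne hsupδ
    have hDbdd : BddAbove (D ∩ Set.Iio δ) := ⟨δ, fun x hx => hx.2.le⟩
    have hdex : ∀ i : ι, ∃ b ∈ D ∩ Set.Iio δ, f i < b := by
      intro i
      refine (lt_csSup_iff hDbdd hDne).1 ?_
      rw [hsupδ, ← hlsub]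
      exact Ordinal.lt_lsub f i
    choose d hd hfd using hdex
    have hAi : ∀ i : ι, {a | a ∈ G ∧ d i ∈ Cc a} ∈ U := fun i => (hd i).1.2
    have hBU : (Pk κ lam ∩ ⋂ i, {a | a ∈ G ∧ d i ∈ Cc a}) ∩
        {a ∈ Pk κ lam | δ ∈ a} ∈ U :=
      hupd _ (inter_index hK _ hικ hAi) _ (hF δ hδlam)
    have hkey : ∀ a, a ∈ (Pk κ lam ∩ ⋂ i, {a | a ∈ G ∧ d i ∈ Cc a}) ∩
        {a ∈ Pk κ lam | δ ∈ a} →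
        a ∈ G ∧ δ ∈ Cc a ∧ Cc a ∩ Set.Iio δ ∈ 𝒞 δ := by
      rintro a ⟨⟨-, hai⟩, -, haδ⟩
      have haG : a ∈ G := (Set.mem_iInter.1 hai hιne.some).1
      have hδa : δ < sSup a := hGlt a haG δ haδ
      have hCbdd : BddAbove (Cc a ∩ Set.Iio δ) := ⟨δ, fun x hx => hx.2.le⟩
      have hdC : ∀ i : ι, d i ∈ Cc a ∩ Set.Iio δ := fun i =>
        ⟨(Set.mem_iInter.1 hai i).2, (hd i).2⟩
      have hCsup : sSup (Cc a ∩ Set.Iio δ) = δ := by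
        refine le_antisymm (csSup_le ⟨d hιne.some, hdC hιne.some⟩
          (fun b hb => hb.2.le)) ?_
        by_contra hcon
        push_neg at hcon
        obtain ⟨i, hsi⟩ := Ordinal.lt_lsub_iff.1
          (by rw [hlsub]; exact hδlim.succ_lt hcon)
        have h1 : d i ≤ sSup (Cc a ∩ Set.Iio δ) := le_csSup hCbdd (hdC i)
        exact lt_irrefl _ (Order.succ_le_iff.1 (hsi.trans ((hfd i).le.trans h1)))
      have hδC : δ ∈ Cc a := (hclub a haG).2.2 δ hδa hδlim.pos hCsup
      exact ⟨haG, hδC, hcoh a haG δ ⟨hδlim.pos, hCsup⟩ hδE⟩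
    have hδD : δ ∈ D := by
      refine ⟨hδlam, hup _ hBU _ ?_ (hmemsub δ)⟩
      intro a ha
      obtain ⟨h1, h2, -⟩ := hkey a ha
      exact ⟨h1, h2⟩
    obtain ⟨e, heT, hBe⟩ := part_lemma hUF hK hBU
      (hseq δ hδlim hδE hδlam).1.2 (fun a => Cc a ∩ Set.Iio δ)
      (fun a ha => (hkey a ha).2.2)
    obtain ⟨a₀, ha₀⟩ := UF.nonempty hUF hBe
    have heIio : e ⊆ Set.Iio δ := by
      rw [← ha₀.2]
      exact Set.inter_subset_right
    have hDe : D ∩ Set.Iio δ = e := by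
      ext x
      constructor
      · rintro ⟨hxD, hxδ⟩
        obtain ⟨a, haB, haC⟩ := UF.nonempty hUF (hupd _ hBe _ hxD.2)
        rw [← haB.2]
        exact ⟨haC.2, hxδ⟩
      · intro hxe
        have hxδ : x < δ := heIio hxe
        refine ⟨⟨hxδ.trans hδlam, hup _ hBe _ ?_ (hmemsub x)⟩, hxδ⟩
        rintro a ⟨ha1, ha2⟩
        refine ⟨(hkey a ha1).1, ?_⟩
        have hxm : x ∈ Cc a ∩ Set.Iio δ := by rw [ha2]; exact hxe
        exact hxm.1
    rw [hDe]
    exact ⟨hδD, heT⟩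
  -- unboundedness of D
  have hunbdd : ∀ β < lam.ord, ∃ γ, γ ∈ D ∧ β < γ := by
    intro β hβ
    set F : Ordinal → Ordinal :=
      fun x => if h : x < lam.ord then (hit x h).choose else 0 with hFdef
    have hF1 : ∀ x, x < lam.ord → x < F x ∧ F x < lam.ord ∧
        {a | a ∈ G ∧ (Cc a ∩ Set.Ioo x (F x)).Nonempty} ∈ U := by
      intro x h
      simp only [hFdef, dif_pos h]
      exact (hit x h).choose_spec
    set b : ℕ → Ordinal := fun n => F^[n] β with hbdef
    have hb0 : b 0 = β := rfl
    have hbsucc : ∀ n, b (n + 1) = F (b n) := fun n =>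
      Function.iterate_succ_apply' F n β
    have hblam : ∀ n, b n < lam.ord := by
      intro n
      induction n with
      | zero => exact hβ
      | succ n ih => rw [hbsucc]; exact (hF1 _ ih).2.1
    have hbmono : ∀ n, b n < b (n + 1) := by
      intro n
      rw [hbsucc]
      exact (hF1 _ (hblam n)).1
    have hbbdd : BddAbove (Set.range b) := by
      refine ⟨lam.ord, ?_⟩
      rintro _ ⟨n, rfl⟩
      exact (hblam n).le
    set γ : Ordinal := ⨆ n, b n with hγdef
    have hble : ∀ n, b n ≤ γ := fun n => le_ciSup hbbdd n
    have hblt : ∀ n, b n < γ := fun n => (hbmono n).trans_le (hble (n + 1))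
    have hγlam : γ < lam.ord := by
      refine Ordinal.iSup_lt_ord ?_ hblam
      rw [Cardinal.mk_nat]
      exact hunc.trans_le hcof
    have hγlim : Order.IsSuccLimit γ := by
      rw [Ordinal.isSuccLimit_iff]; refine ⟨?_, Order.isSuccPrelimit_of_succ_lt ?_⟩
      · exact ((show (0 : Ordinal) ≤ b 0 from zero_le).trans_lt (hblt 0)).ne'
      · intro x hx
        obtain ⟨n, hn⟩ := (lt_ciSup_iff hbbdd).1 hx
        exact lt_of_le_of_lt (Order.succ_le_of_lt hn) (hblt n)
    have hW : ∀ n : ℕ,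
        {a | a ∈ G ∧ (Cc a ∩ Set.Ioo (b n) (b (n+1))).Nonempty} ∈ U := by
      intro n
      have h := (hF1 _ (hblam n)).2.2
      rwa [← hbsucc n] at h
    have hκℕ : #ℕ < κ := by rw [Cardinal.mk_nat]; exact hunc
    have hBU : (Pk κ lam ∩ ⋂ n : ℕ,
        {a | a ∈ G ∧ (Cc a ∩ Set.Ioo (b n) (b (n+1))).Nonempty}) ∩
        {a ∈ Pk κ lam | γ ∈ a} ∈ U :=
      hupd _ (inter_index hK _ hκℕ hW) _ (hF γ hγlam)
    have hsubγ : ((Pk κ lam ∩ ⋂ n : ℕ,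
        {a | a ∈ G ∧ (Cc a ∩ Set.Ioo (b n) (b (n+1))).Nonempty}) ∩
        {a ∈ Pk κ lam | γ ∈ a}) ⊆ {a | a ∈ G ∧ γ ∈ Cc a} := by
      rintro a ⟨⟨-, hai⟩, -, haγ⟩
      have haG : a ∈ G := (Set.mem_iInter.1 hai 0).1
      have hγa : γ < sSup a := hGlt a haG γ haγ
      have hCbdd : BddAbove (Cc a ∩ Set.Iio γ) := ⟨γ, fun x hx => hx.2.le⟩
      have hmem : ∀ n : ℕ, ∃ η ∈ Cc a, b n < η ∧ η < γ := by
        intro n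
        obtain ⟨η, hη, hn1, hn2⟩ := (Set.mem_iInter.1 hai n).2
        exact ⟨η, hη, hn1, hn2.trans_le (hble (n+1))⟩
      have hCsup : sSup (Cc a ∩ Set.Iio γ) = γ := by
        refine le_antisymm ?_ ?_
        · obtain ⟨η, hη, -, hηγ⟩ := hmem 0
          exact csSup_le ⟨η, hη, hηγ⟩ (fun x hx => hx.2.le)
        · rw [hγdef]
          refine ciSup_le (fun n => ?_)
          obtain ⟨η, hη, hn1, hn2⟩ := hmem n
          exact hn1.le.trans (le_csSup hCbdd ⟨hη, hn2⟩)
      exact ⟨haG, (hclub a haG).2.2 γ hγa hγlim.pos hCsup⟩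
    refine ⟨γ, ⟨hγlam, hup _ hBU _ hsubγ (hmemsub γ)⟩, ?_⟩
    rw [← hb0]
    exact hblt 0
  -- limit points of D of small cofinality above any given ordinal
  have hlimpts : ∀ β < lam.ord, ∃ δ, β < δ ∧ δ < lam.ord ∧ Order.IsSuccLimit δ ∧
      δ.cof < κ ∧ sSup (D ∩ Set.Iio δ) = δ := by
    intro β hβ
    set F : Ordinal → Ordinal :=
      fun x => if h : x < lam.ord then (hunbdd x h).choose else 0 with hFdef
    have hF1 : ∀ x, x < lam.ord → F x ∈ D ∧ x < F x := by
      intro x h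
      simp only [hFdef, dif_pos h]
      exact (hunbdd x h).choose_spec
    set b : ℕ → Ordinal := fun n => F^[n] β with hbdef
    have hb0 : b 0 = β := rfl
    have hbsucc : ∀ n, b (n + 1) = F (b n) := fun n =>
      Function.iterate_succ_apply' F n β
    have hblam : ∀ n, b n < lam.ord := by
      intro n
      induction n with
      | zero => exact hβ
      | succ n ih =>
        rw [hbsucc]
        exact ((hF1 _ ih).1).1
    have hbmono : ∀ n, b n < b (n + 1) := by
      intro n
      rw [hbsucc]
      exact (hF1 _ (hblam n)).2
    have hbD : ∀ n, b (n + 1) ∈ D := by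
      intro n
      rw [hbsucc]
      exact (hF1 _ (hblam n)).1
    have hbbdd : BddAbove (Set.range b) := by
      refine ⟨lam.ord, ?_⟩
      rintro _ ⟨n, rfl⟩
      exact (hblam n).le
    set δ : Ordinal := ⨆ n, b n with hδdef
    have hble : ∀ n, b n ≤ δ := fun n => le_ciSup hbbdd n
    have hblt : ∀ n, b n < δ := fun n => (hbmono n).trans_le (hble (n + 1))
    have hδlam : δ < lam.ord := by
      refine Ordinal.iSup_lt_ord ?_ hblam
      rw [Cardinal.mk_nat]
      exact hunc.trans_le hcof
    have hδlim : Order.IsSuccLimit δ := by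
      rw [Ordinal.isSuccLimit_iff]; refine ⟨?_, Order.isSuccPrelimit_of_succ_lt ?_⟩
      · exact ((show (0 : Ordinal) ≤ b 0 from zero_le).trans_lt (hblt 0)).ne'
      · intro x hx
        obtain ⟨n, hn⟩ := (lt_ciSup_iff hbbdd).1 hx
        exact lt_of_le_of_lt (Order.succ_le_of_lt hn) (hblt n)
    have hδcof : δ.cof < κ := by
      refine (Ordinal.cof_iSup_le hblt).trans_lt ?_
      rw [Cardinal.mk_nat]
      exact hunc
    have hDbdd : BddAbove (D ∩ Set.Iio δ) := ⟨δ, fun x hx => hx.2.le⟩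
    have hsup : sSup (D ∩ Set.Iio δ) = δ := by
      refine le_antisymm (csSup_le ⟨b 1, hbD 0, hblt 1⟩ (fun x hx => hx.2.le)) ?_
      rw [hδdef]
      refine ciSup_le (fun n => ?_)
      exact (hbmono n).le.trans (le_csSup hDbdd ⟨hbD n, hblt (n + 1)⟩)
    refine ⟨δ, ?_, hδlam, hδlim, hδcof, hsup⟩
    rw [← hb0]
    exact hblt 0
  -- D is closed
  have hIioInter : ∀ x y : Ordinal, x < y →
      (D ∩ Set.Iio y) ∩ Set.Iio x = D ∩ Set.Iio x := by
    intro x y hxy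
    rw [Set.inter_assoc, Set.Iio_inter_Iio, min_eq_right hxy.le]
  have hclosed : ∀ α < lam.ord, 0 < α → sSup (D ∩ Set.Iio α) = α → α ∈ D := by
    intro α hα h0 hsupα
    obtain ⟨δ, hαδ, hδlam, hδlim, hδcof, hδsup⟩ := hlimpts α hα
    obtain ⟨-, he⟩ := thread δ hδlim hδlam hδcof hδsup
    have hδE : δ ∈ E := hE δ hδlam hδcof hδlim
    have hclubδ : OrdClub δ (D ∩ Set.Iio δ) :=
      ((hseq δ hδlim hδE hδlam).2 _ he).1
    have hmem := hclubδ.2.2 α hαδ h0 (by rw [hIioInter α δ hαδ]; exact hsupα)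
    exact hmem.1
  -- conclusion
  have hunb' : ∀ β < lam.ord, ∃ γ ∈ D, β ≤ γ := by
    intro β hβ
    obtain ⟨γ, hγD, hβγ⟩ := hunbdd β hβ
    exact ⟨γ, hγD, hβγ.le⟩
  refine ⟨D, ⟨fun β hβ => hβ.1, hunb', hclosed⟩, ?_⟩
  intro δ hlp hδE hδlam
  obtain ⟨h0, hsupδ⟩ := hlp
  have hDne : (D ∩ Set.Iio δ).Nonempty := by
    rw [Set.nonempty_iff_ne_empty]
    intro h
    rw [h, csSup_empty, Ordinal.bot_eq_zero] at hsupδ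
    exact h0.ne hsupδ
  have hDbdd : BddAbove (D ∩ Set.Iio δ) := ⟨δ, fun x hx => hx.2.le⟩
  have hδlim : Order.IsSuccLimit δ := by
    rw [Ordinal.isSuccLimit_iff]; refine ⟨?_, Order.isSuccPrelimit_of_succ_lt ?_⟩
    · exact h0.ne'
    · intro x hx
      obtain ⟨y, hy, hxy⟩ := (lt_csSup_iff hDbdd hDne).1 (by rw [hsupδ]; exact hx)
      exact lt_of_le_of_lt (Order.succ_le_of_lt hxy) hy.2
  by_cases hc : δ.cof < κ
  · exact (thread δ hδlim hδlam hc hsupδ).2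
  · obtain ⟨δ', hδδ', hδ'lam, hδ'lim, hδ'cof, hδ'sup⟩ := hlimpts δ hδlam
    obtain ⟨-, he'⟩ := thread δ' hδ'lim hδ'lam hδ'cof hδ'sup
    have hδ'E : δ' ∈ E := hE δ' hδ'lam hδ'cof hδ'lim
    have hcoh' := ((hseq δ' hδ'lim hδ'E hδ'lam).2 _ he').2 δ
      ⟨h0, by rw [hIioInter δ δ' hδδ']; exact hsupδ⟩ hδE
    rwa [hIioInter δ δ' hδδ'] at hcoh'

end SquareFails

theorem supercompact_implies_square_fails (κ : Cardinal.{0})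
    (hreg : κ.IsRegular) (hunc : ℵ₀ < κ) (hsc : IsSupercompact κ) :
    ∀ lam : Cardinal.{0}, κ ≤ lam → κ ≤ lam.ord.cof →
      ¬ SquareE κ lam.ord {α : Ordinal | α.cof < κ} ∧
        ¬ SquareE 2 lam.ord (Set.Iio lam.ord) := by
  intro lam hklam hcof
  obtain ⟨U, hUF, hK, hFi, hN⟩ := hsc lam hklam
  constructor
  · rintro ⟨𝒞, hseq1, hthread⟩
    exact hthread (exists_thread hunc hklam hcof hUF hK hFi hN
      {α : Ordinal | α.cof < κ} 𝒞 (fun δ _ h2 _ => h2) hseq1)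
  · rintro ⟨𝒞, hseq1, hthread⟩
    refine hthread (exists_thread hunc hklam hcof hUF hK hFi hN
      (Set.Iio lam.ord) 𝒞 (fun δ h1 _ _ => h1) ?_)
    intro α hα hαE hαlam
    obtain ⟨⟨hne, hcard⟩, h2⟩ := hseq1 α hα hαE hαlam
    have h2κ : (2 : Cardinal) ≤ κ := by
      have h2a : (2 : Cardinal) < ℵ₀ := by simpa using Cardinal.nat_lt_aleph0 2
      exact (h2a.trans hunc).le
    exact ⟨⟨hne, hcard.trans_le (Cardinal.lift_le.2 h2κ)⟩, h2⟩
end
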